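/- For any four discrete random variables X₁, X₂, X₃, X₄ satisfying I(X₁;X₂) = 0 and I(X₁;X₂|X₃) = 0, the inequality I(X₃;X₄) ≤ I(X₃;X₄|X₁) + I(X₃;X₄|X₂) holds. -/

import Mathlib

/-- Shannon entropy of a discrete random variable `X : Ω → S` on a finite sample
space with probability mass function `p`. -/
noncomputable def shannonEntropy {Ω S : Type*} [Fintype Ω] [Fintype S] [DecidableEq S]
    (p : Ω → ℝ) (X : Ω → S) : ℝ :=
  ∑ s : S, Real.negMulLog (∑ ω : Ω, if X ω = s then p ω else 0)

section
variable {Ω S₁ S₂ S₃ S₄ : Type*} [Fintype Ω] [Fintype S₁] [Fintype S₂] [Fintype S₃] [Fintype S₄]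
  [DecidableEq S₁] [DecidableEq S₂] [DecidableEq S₃] [DecidableEq S₄]

/-- Mutual information `I(X;Y) = H(X) + H(Y) - H(X,Y)`. -/
noncomputable def mutualInfo (p : Ω → ℝ) (X : Ω → S₁) (Y : Ω → S₂) : ℝ :=
  shannonEntropy p X + shannonEntropy p Y - shannonEntropy p (fun ω => (X ω, Y ω))

/-- Conditional mutual information `I(X;Y|Z) = H(X,Z) + H(Y,Z) - H(X,Y,Z) - H(Z)`. -/
noncomputable def condMutualInfo (p : Ω → ℝ) (X : Ω → S₁) (Y : Ω → S₂) (Z : Ω → S₃) : ℝ :=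
  shannonEntropy p (fun ω => (X ω, Z ω)) + shannonEntropy p (fun ω => (Y ω, Z ω))
    - shannonEntropy p (fun ω => (X ω, Y ω, Z ω)) - shannonEntropy p Z

end


open Real Finset Function

set_option linter.unusedSectionVars false
set_option linter.unusedVariables false

noncomputable def dist' {V U : Type*} [Fintype V] [DecidableEq U]
    (w : V → ℝ) (f : V → U) : U → ℝ := fun u => ∑ v, if f v = u then w v else 0

section basic
variable {V U A B C : Type*} [Fintype V] [Fintype U] [Fintype A] [Fintype B] [Fintype C]
  [DecidableEq U] [DecidableEq A] [DecidableEq B] [DecidableEq C]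
  {w : V → ℝ} {f : V → U}

lemma dist'_nonneg (hw : ∀ v, 0 ≤ w v) (u : U) : 0 ≤ dist' w f u :=
  Finset.sum_nonneg fun v _ => by split <;> simp [hw v]

lemma sum_dist' : ∑ u, dist' w f u = ∑ v, w v := by
  unfold dist'
  rw [Finset.sum_comm]
  simp

lemma dist'_id [DecidableEq V] (v : V) : dist' w id v = w v := by
  simp [dist']

lemma dist'_comp (g : U → A) (a : A) :
    dist' w (fun v => g (f v)) a = dist' (dist' w f) g a := by
  unfold dist'
  have h1 : ∀ u : U, (if g u = a then ∑ v, if f v = u then w v else 0 else 0)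
      = ∑ v, if f v = u then (if g (f v) = a then w v else 0) else 0 := by
    intro u
    by_cases hg : g u = a
    · simp only [hg, if_true]
      refine Finset.sum_congr rfl fun v _ => ?_
      by_cases hf : f v = u
      · simp [hf, hg]
      · simp [hf]
    · simp only [hg, if_false]
      refine (Finset.sum_eq_zero fun v _ => ?_).symm
      by_cases hf : f v = u
      · simp [hf, hg]
      · simp [hf]
  simp only [h1]
  rw [Finset.sum_comm]
  refine Finset.sum_congr rfl fun v _ => ?_
  simp

lemma le_dist' (hw : ∀ v, 0 ≤ w v) (v : V) : w v ≤ dist' w f (f v) := by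
  unfold dist'
  calc w v = if f v = f v then w v else 0 := by simp
  _ ≤ _ := Finset.single_le_sum (f := fun v' => if f v' = f v then w v' else 0)
      (fun v' _ => by split <;> simp [hw v']) (mem_univ v)

lemma dist'_ne_zero (hw : ∀ v, 0 ≤ w v) {v : V} (hv : w v ≠ 0) : dist' w f (f v) ≠ 0 :=
  ne_of_gt (lt_of_lt_of_le (lt_of_le_of_ne (hw v) (Ne.symm hv)) (le_dist' hw v))

lemma shannonEntropy_eq_dist' : shannonEntropy w f = ∑ u, negMulLog (dist' w f u) := rfl

lemma entropy_comp (g : U → A) :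
    shannonEntropy w (fun v => g (f v)) = shannonEntropy (dist' w f) g := by
  simp only [shannonEntropy_eq_dist']
  congr 1
  ext a
  rw [dist'_comp]

lemma entropy_exp :
    shannonEntropy w f = ∑ v, -(w v * Real.log (dist' w f (f v))) := by
  rw [shannonEntropy_eq_dist']
  have h1 : ∀ u, negMulLog (dist' w f u)
      = ∑ v, if f v = u then -(w v * Real.log (dist' w f u)) else 0 := by
    intro u
    have h2 : negMulLog (dist' w f u)
        = -((∑ v, if f v = u then w v else 0) * Real.log (dist' w f u)) := by
      rw [negMulLog, neg_mul]; rfl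
    rw [h2, Finset.sum_mul, ← Finset.sum_neg_distrib]
    refine Finset.sum_congr rfl fun v _ => ?_
    split <;> simp
  simp only [h1]
  rw [Finset.sum_comm]
  refine Finset.sum_congr rfl fun v _ => ?_
  simp

lemma entropy_comp_inj (e : U → A) (he : Injective e) :
    shannonEntropy w (fun v => e (f v)) = shannonEntropy w f := by
  rw [entropy_comp, shannonEntropy_eq_dist', shannonEntropy_eq_dist']
  set w' := dist' w f with hw'
  have key : ∀ u, dist' w' e (e u) = w' u := by
    intro u
    unfold dist'
    simp [he.eq_iff]
  have zero : ∀ a ∈ (univ : Finset A), a ∉ univ.image e → negMulLog (dist' w' e a) = 0 := by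
    intro a _ ha
    have : dist' w' e a = 0 := by
      refine Finset.sum_eq_zero fun u _ => ?_
      have : e u ≠ a := fun h => ha (Finset.mem_image.2 ⟨u, mem_univ u, h⟩)
      simp [this]
    simp [this]
  rw [← Finset.sum_subset (Finset.subset_univ (univ.image e)) zero,
    Finset.sum_image (fun x _ y _ h => he h)]
  simp only [key]

end basic

section gibbs
open Real Finset

lemma gibbs_term (a b : ℝ) (ha : 0 ≤ a) (hb : 0 ≤ b) (hab : a ≠ 0 → b ≠ 0) :
    a - b ≤ a * (Real.log a - Real.log b) := by
  rcases eq_or_lt_of_le ha with h | h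
  · simp [← h]; exact hb
  · have hb' : 0 < b := lt_of_le_of_ne hb (Ne.symm (hab (ne_of_gt h)))
    have hlog : Real.log (b / a) ≤ b / a - 1 := Real.log_le_sub_one_of_pos (by positivity)
    rw [Real.log_div (ne_of_gt hb') (ne_of_gt h)] at hlog
    have h2 := mul_le_mul_of_nonneg_left hlog (le_of_lt h)
    have h3 : a * (b / a - 1) = b - a := by field_simp
    rw [h3] at h2
    nlinarith

lemma gibbs_sum {ι : Type*} [Fintype ι] (w u : ι → ℝ) (hw : ∀ i, 0 ≤ w i)
    (hu : ∀ i, 0 ≤ u i) (hsupp : ∀ i, w i ≠ 0 → u i ≠ 0)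
    (hsum : ∑ i, u i ≤ ∑ i, w i) :
    0 ≤ ∑ i, w i * (Real.log (w i) - Real.log (u i)) := by
  have h1 : ∑ i, (w i - u i) ≤ ∑ i, w i * (Real.log (w i) - Real.log (u i)) :=
    Finset.sum_le_sum fun i _ => gibbs_term (w i) (u i) (hw i) (hu i) (hsupp i)
  rw [Finset.sum_sub_distrib] at h1
  linarith

lemma gibbs_eq {ι : Type*} [Fintype ι] (w u : ι → ℝ) (hw : ∀ i, 0 ≤ w i)
    (hu : ∀ i, 0 ≤ u i) (hsupp : ∀ i, w i ≠ 0 → u i ≠ 0)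
    (hsum : ∑ i, u i ≤ ∑ i, w i)
    (hz : ∑ i, w i * (Real.log (w i) - Real.log (u i)) ≤ 0) :
    ∀ i, w i = u i := by
  have hterm : ∀ i ∈ (univ : Finset ι),
      0 ≤ w i * (Real.log (w i) - Real.log (u i)) - (w i - u i) := fun i _ => by
    have := gibbs_term (w i) (u i) (hw i) (hu i) (hsupp i)
    linarith
  have hsum0 : ∑ i, (w i * (Real.log (w i) - Real.log (u i)) - (w i - u i)) = 0 := by
    have h1 : ∑ i, (w i * (Real.log (w i) - Real.log (u i)) - (w i - u i))
        = ∑ i, w i * (Real.log (w i) - Real.log (u i)) - (∑ i, w i - ∑ i, u i) := by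
      rw [Finset.sum_sub_distrib, Finset.sum_sub_distrib]
    have h2 := Finset.sum_nonneg hterm
    rw [h1] at h2 ⊢
    linarith
  have heach := (Finset.sum_eq_zero_iff_of_nonneg hterm).1 hsum0
  intro i
  have hi := heach i (mem_univ i)
  rcases eq_or_lt_of_le (hw i) with h | h
  · -- w i = 0 : then - (0 - u i) = 0
    rw [← h] at hi ⊢
    simp at hi
    linarith
  · by_contra hne
    have hu' : 0 < u i := lt_of_le_of_ne (hu i) (Ne.symm (hsupp i (ne_of_gt h)))
    have hx : u i / w i ≠ 1 := by
      intro hh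
      exact hne (by field_simp at hh; linarith)
    have hlog : Real.log (u i / w i) < u i / w i - 1 :=
      Real.log_lt_sub_one_of_pos (by positivity) hx
    rw [Real.log_div (ne_of_gt hu') (ne_of_gt h)] at hlog
    have h2 := mul_lt_mul_of_pos_left hlog h
    have h3 : w i * (u i / w i - 1) = u i - w i := by field_simp
    rw [h3] at h2
    nlinarith

end gibbs

section prodmarg
open Real Finset Function
variable {V U A B C : Type*} [Fintype V] [Fintype U] [Fintype A] [Fintype B] [Fintype C]
  [DecidableEq U] [DecidableEq A] [DecidableEq B] [DecidableEq C]
  {w : V → ℝ}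

lemma sum_dist'_fst (f : V → A) (g : V → U) (u : U) :
    ∑ a, dist' w (fun v => (f v, g v)) (a, u) = dist' w g u := by
  unfold dist'
  rw [Finset.sum_comm]
  refine Finset.sum_congr rfl fun v _ => ?_
  by_cases hg : g v = u
  · simp [hg, Prod.ext_iff]
  · simp [hg, Prod.ext_iff]

lemma sum_dist'_snd (f : V → U) (g : V → B) (u : U) :
    ∑ b, dist' w (fun v => (f v, g v)) (u, b) = dist' w f u := by
  unfold dist'
  rw [Finset.sum_comm]
  refine Finset.sum_congr rfl fun v _ => ?_
  by_cases hf : f v = u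
  · simp [hf, Prod.ext_iff]
  · simp [hf, Prod.ext_iff]

lemma sum_dist'_triple (f : V → A) (g : V → B) (h : V → C) (a : A) (b : B) :
    ∑ c, dist' w (fun v => (f v, g v, h v)) (a, b, c) = dist' w (fun v => (f v, g v)) (a, b) := by
  unfold dist'
  rw [Finset.sum_comm]
  refine Finset.sum_congr rfl fun v _ => ?_
  by_cases hf : f v = a ∧ g v = b
  · simp [hf.1, hf.2, Prod.ext_iff]
  · rw [not_and_or] at hf
    rcases hf with hf | hf <;> simp [hf, Prod.ext_iff]

lemma entropy_id_dist (f : V → U) : shannonEntropy (dist' w f) id = shannonEntropy w f :=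
  (entropy_comp (w := w) (f := f) id).symm

end prodmarg

section submodcore
open Real Finset Function
variable {A B C : Type*} [Fintype A] [Fintype B] [Fintype C]
  [DecidableEq A] [DecidableEq B] [DecidableEq C]

/-- u-function for conditional mutual information: m13 * m23 / m3 -/
noncomputable def uCI (j : A × B × C → ℝ) : A × B × C → ℝ := fun t =>
  dist' j (fun t => (t.1, t.2.2)) (t.1, t.2.2) * dist' j (fun t => (t.2.1, t.2.2)) (t.2.1, t.2.2)
    / dist' j (fun t => t.2.2) t.2.2

variable {j : A × B × C → ℝ}

lemma uCI_nonneg (hj : ∀ t, 0 ≤ j t) (t : A × B × C) : 0 ≤ uCI j t := by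
  unfold uCI
  have h1 := dist'_nonneg (f := fun t : A × B × C => (t.1, t.2.2)) hj (t.1, t.2.2)
  have h2 := dist'_nonneg (f := fun t : A × B × C => (t.2.1, t.2.2)) hj (t.2.1, t.2.2)
  have h3 := dist'_nonneg (f := fun t : A × B × C => t.2.2) hj t.2.2
  positivity

lemma uCI_ne_zero (hj : ∀ t, 0 ≤ j t) {t : A × B × C} (ht : j t ≠ 0) : uCI j t ≠ 0 := by
  unfold uCI
  have h1 : dist' j (fun t => (t.1, t.2.2)) (t.1, t.2.2) ≠ 0 :=
    dist'_ne_zero (f := fun t : A × B × C => (t.1, t.2.2)) hj ht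
  have h2 : dist' j (fun t => (t.2.1, t.2.2)) (t.2.1, t.2.2) ≠ 0 :=
    dist'_ne_zero (f := fun t : A × B × C => (t.2.1, t.2.2)) hj ht
  have h3 : dist' j (fun t => t.2.2) t.2.2 ≠ 0 :=
    dist'_ne_zero (f := fun t : A × B × C => t.2.2) hj ht
  exact div_ne_zero (mul_ne_zero h1 h2) h3

lemma sum_uCI (hj : ∀ t, 0 ≤ j t) : ∑ t, uCI j t ≤ ∑ t, j t := by
  have key : ∑ t, uCI j t = ∑ c, (dist' j (fun t : A × B × C => t.2.2) c *
      dist' j (fun t : A × B × C => t.2.2) c / dist' j (fun t : A × B × C => t.2.2) c) := by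
    calc ∑ t, uCI j t
        = ∑ a, ∑ b, ∑ c, (dist' j (fun t : A × B × C => (t.1, t.2.2)) (a, c) *
            dist' j (fun t : A × B × C => (t.2.1, t.2.2)) (b, c) /
            dist' j (fun t : A × B × C => t.2.2) c) := by
          simp only [Fintype.sum_prod_type]; rfl
      _ = ∑ c, ∑ a, ∑ b, (dist' j (fun t : A × B × C => (t.1, t.2.2)) (a, c) *
            dist' j (fun t : A × B × C => (t.2.1, t.2.2)) (b, c) /
            dist' j (fun t : A × B × C => t.2.2) c) := by
          refine Eq.trans (Finset.sum_congr rfl fun a _ => Finset.sum_comm) ?_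
          exact Finset.sum_comm
      _ = ∑ c, ((∑ a, dist' j (fun t : A × B × C => (t.1, t.2.2)) (a, c)) *
            (∑ b, dist' j (fun t : A × B × C => (t.2.1, t.2.2)) (b, c)) /
            dist' j (fun t : A × B × C => t.2.2) c) := by
          refine Finset.sum_congr rfl fun c _ => ?_
          have inner : ∀ a, (∑ b, dist' j (fun t : A × B × C => (t.1, t.2.2)) (a, c) *
              dist' j (fun t : A × B × C => (t.2.1, t.2.2)) (b, c) /
              dist' j (fun t : A × B × C => t.2.2) c)
              = dist' j (fun t : A × B × C => (t.1, t.2.2)) (a, c) *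
              (∑ b, dist' j (fun t : A × B × C => (t.2.1, t.2.2)) (b, c)) /
              dist' j (fun t : A × B × C => t.2.2) c := by
            intro a; rw [← Finset.sum_div, ← Finset.mul_sum]
          simp only [inner]
          rw [← Finset.sum_div, ← Finset.sum_mul]
      _ = ∑ c, (dist' j (fun t : A × B × C => t.2.2) c *
            dist' j (fun t : A × B × C => t.2.2) c / dist' j (fun t : A × B × C => t.2.2) c) := by
          refine Finset.sum_congr rfl fun c _ => ?_
          rw [sum_dist'_fst (fun t : A × B × C => t.1) (fun t : A × B × C => t.2.2),
            sum_dist'_fst (fun t : A × B × C => t.2.1) (fun t : A × B × C => t.2.2)]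
  rw [key]
  calc ∑ c, (dist' j (fun t : A × B × C => t.2.2) c * dist' j (fun t : A × B × C => t.2.2) c
        / dist' j (fun t : A × B × C => t.2.2) c)
      ≤ ∑ c, dist' j (fun t : A × B × C => t.2.2) c := by
        refine Finset.sum_le_sum fun c _ => ?_
        by_cases h : dist' j (fun t : A × B × C => t.2.2) c = 0
        · simp [h]
        · rw [mul_div_assoc, div_self h, mul_one]
    _ = ∑ t, j t := sum_dist'

end submodcore

section submodcore2
open Real Finset Function
variable {A B C : Type*} [Fintype A] [Fintype B] [Fintype C]
  [DecidableEq A] [DecidableEq B] [DecidableEq C]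
  {j : A × B × C → ℝ}

lemma submod_core (hj : ∀ t, 0 ≤ j t) :
    shannonEntropy j (fun t => (t.1, t.2.2)) + shannonEntropy j (fun t => (t.2.1, t.2.2))
      - shannonEntropy j id - shannonEntropy j (fun t => t.2.2)
    = ∑ t, j t * (Real.log (j t) - Real.log (uCI j t)) := by
  simp only [entropy_exp, dist'_id, id_eq]
  rw [← Finset.sum_add_distrib, ← Finset.sum_sub_distrib, ← Finset.sum_sub_distrib]
  refine Finset.sum_congr rfl fun t _ => ?_
  by_cases ht : j t = 0
  · simp [ht]
  · have h1 : dist' j (fun t : A × B × C => (t.1, t.2.2)) (t.1, t.2.2) ≠ 0 :=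
      dist'_ne_zero (f := fun t : A × B × C => (t.1, t.2.2)) hj ht
    have h2 : dist' j (fun t : A × B × C => (t.2.1, t.2.2)) (t.2.1, t.2.2) ≠ 0 :=
      dist'_ne_zero (f := fun t : A × B × C => (t.2.1, t.2.2)) hj ht
    have h3 : dist' j (fun t : A × B × C => t.2.2) t.2.2 ≠ 0 :=
      dist'_ne_zero (f := fun t : A × B × C => t.2.2) hj ht
    have hu : Real.log (uCI j t)
        = Real.log (dist' j (fun t : A × B × C => (t.1, t.2.2)) (t.1, t.2.2))
          + Real.log (dist' j (fun t : A × B × C => (t.2.1, t.2.2)) (t.2.1, t.2.2))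
          - Real.log (dist' j (fun t : A × B × C => t.2.2) t.2.2) := by
      unfold uCI
      rw [Real.log_div (mul_ne_zero h1 h2) h3, Real.log_mul h1 h2]
    rw [hu]
    ring

lemma condMI_core (hj : ∀ t, 0 ≤ j t) :
    0 ≤ shannonEntropy j (fun t => (t.1, t.2.2)) + shannonEntropy j (fun t => (t.2.1, t.2.2))
      - shannonEntropy j id - shannonEntropy j (fun t => t.2.2) := by
  rw [submod_core hj]
  exact gibbs_sum _ _ hj (uCI_nonneg hj) (fun t => uCI_ne_zero hj) (sum_uCI hj)

lemma ci_core (hj : ∀ t, 0 ≤ j t)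
    (h0 : shannonEntropy j (fun t => (t.1, t.2.2)) + shannonEntropy j (fun t => (t.2.1, t.2.2))
      - shannonEntropy j id - shannonEntropy j (fun t => t.2.2) = 0) :
    ∀ t, j t = uCI j t := by
  refine gibbs_eq _ _ hj (uCI_nonneg hj) (fun t => uCI_ne_zero hj) (sum_uCI hj) ?_
  rw [← submod_core hj, h0]

end submodcore2

section paircore
open Real Finset Function
variable {A B : Type*} [Fintype A] [Fintype B] [DecidableEq A] [DecidableEq B]
  {m : A × B → ℝ}

noncomputable def uMI (m : A × B → ℝ) : A × B → ℝ := fun t =>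
  dist' m (fun t => t.1) t.1 * dist' m (fun t => t.2) t.2

lemma sum_uMI : ∑ t, uMI m t = (∑ t, m t) * (∑ t, m t) := by
  calc ∑ t, uMI m t
      = ∑ a, ∑ b, dist' m (fun t : A × B => t.1) a * dist' m (fun t : A × B => t.2) b := by
        simp only [Fintype.sum_prod_type]; rfl
    _ = (∑ a, dist' m (fun t : A × B => t.1) a) * (∑ b, dist' m (fun t : A × B => t.2) b) := by
        rw [Finset.sum_mul_sum]
    _ = (∑ t, m t) * (∑ t, m t) := by rw [sum_dist', sum_dist']

lemma mi_core (hm : ∀ t, 0 ≤ m t) :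
    shannonEntropy m (fun t => t.1) + shannonEntropy m (fun t => t.2) - shannonEntropy m id
    = ∑ t, m t * (Real.log (m t) - Real.log (uMI m t)) := by
  simp only [entropy_exp, dist'_id, id_eq]
  rw [← Finset.sum_add_distrib, ← Finset.sum_sub_distrib]
  refine Finset.sum_congr rfl fun t _ => ?_
  by_cases ht : m t = 0
  · simp [ht]
  · have h1 : dist' m (fun t : A × B => t.1) t.1 ≠ 0 :=
      dist'_ne_zero (f := fun t : A × B => t.1) hm ht
    have h2 : dist' m (fun t : A × B => t.2) t.2 ≠ 0 :=
      dist'_ne_zero (f := fun t : A × B => t.2) hm ht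
    have hu : Real.log (uMI m t) = Real.log (dist' m (fun t : A × B => t.1) t.1)
        + Real.log (dist' m (fun t : A × B => t.2) t.2) := by
      unfold uMI
      exact Real.log_mul h1 h2
    rw [hu]
    ring

lemma indep_core (hm : ∀ t, 0 ≤ m t) (hm1 : ∑ t, m t = 1)
    (h0 : shannonEntropy m (fun t => t.1) + shannonEntropy m (fun t => t.2)
      - shannonEntropy m id = 0) :
    ∀ t, m t = uMI m t := by
  refine gibbs_eq _ _ hm
    (fun t => mul_nonneg (dist'_nonneg (f := fun t : A × B => t.1) hm t.1)
      (dist'_nonneg (f := fun t : A × B => t.2) hm t.2))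
    (fun t ht => mul_ne_zero (dist'_ne_zero (f := fun t : A × B => t.1) hm ht)
      (dist'_ne_zero (f := fun t : A × B => t.2) hm ht))
    (by rw [sum_uMI, hm1]; norm_num) ?_
  rw [← mi_core hm, h0]

end paircore

section iiicore
open Real Finset Function
variable {A B C : Type*} [Fintype A] [Fintype B] [Fintype C]
  [DecidableEq A] [DecidableEq B] [DecidableEq C]

/-- Key lemma: if `P` is a pmf on `A × B × C` that factorizes through the
13-, 23-, and 3-marginals of `j`, and whose 12-marginal is the product of the
1- and 2-marginals of `j`, then `I_j(1;2) ≤ I_j(1;2|3)`. -/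
lemma iii_core (j P : A × B × C → ℝ) (hj : ∀ t, 0 ≤ j t)
    (hP : ∀ t : A × B × C, P t = dist' j (fun t => (t.1, t.2.2)) (t.1, t.2.2) *
      dist' j (fun t => (t.2.1, t.2.2)) (t.2.1, t.2.2) / dist' j (fun t => t.2.2) t.2.2)
    (hP12 : ∀ a b, (∑ c, P (a, b, c))
      = dist' j (fun t => t.1) a * dist' j (fun t => t.2.1) b) :
    shannonEntropy j (fun t => t.1) + shannonEntropy j (fun t => t.2.1)
      - shannonEntropy j (fun t => (t.1, t.2.1))
    ≤ shannonEntropy j (fun t => (t.1, t.2.2)) + shannonEntropy j (fun t => (t.2.1, t.2.2))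
      - shannonEntropy j id - shannonEntropy j (fun t => t.2.2) := by
  classical
  set d1 : A → ℝ := dist' j (fun t => t.1) with hd1
  set d2 : B → ℝ := dist' j (fun t => t.2.1) with hd2
  set d12 : A × B → ℝ := dist' j (fun t => (t.1, t.2.1)) with hd12
  set u : A × B × C → ℝ := fun t => P t * d12 (t.1, t.2.1) / (d1 t.1 * d2 t.2.1) with hu
  have hPnn : ∀ t, 0 ≤ P t := fun t => by
    rw [hP t]
    have := dist'_nonneg (f := fun t : A × B × C => (t.1, t.2.2)) hj (t.1, t.2.2)
    have := dist'_nonneg (f := fun t : A × B × C => (t.2.1, t.2.2)) hj (t.2.1, t.2.2)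
    have := dist'_nonneg (f := fun t : A × B × C => t.2.2) hj t.2.2
    positivity
  have hunn : ∀ t, 0 ≤ u t := fun t => by
    have h1 := dist'_nonneg (f := fun t : A × B × C => t.1) hj t.1
    have h2 := dist'_nonneg (f := fun t : A × B × C => t.2.1) hj t.2.1
    have h3 := dist'_nonneg (f := fun t : A × B × C => (t.1, t.2.1)) hj (t.1, t.2.1)
    have h4 := hPnn t
    simp only [hu]
    positivity
  have hsupp : ∀ t, j t ≠ 0 → u t ≠ 0 := by
    intro t ht
    have h1 : d1 t.1 ≠ 0 := dist'_ne_zero (f := fun t : A × B × C => t.1) hj ht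
    have h2 : d2 t.2.1 ≠ 0 := dist'_ne_zero (f := fun t : A × B × C => t.2.1) hj ht
    have h3 : d12 (t.1, t.2.1) ≠ 0 :=
      dist'_ne_zero (f := fun t : A × B × C => (t.1, t.2.1)) hj ht
    have hPt : P t ≠ 0 := by
      rw [hP t]
      exact div_ne_zero (mul_ne_zero
        (dist'_ne_zero (f := fun t : A × B × C => (t.1, t.2.2)) hj ht)
        (dist'_ne_zero (f := fun t : A × B × C => (t.2.1, t.2.2)) hj ht))
        (dist'_ne_zero (f := fun t : A × B × C => t.2.2) hj ht)
    exact div_ne_zero (mul_ne_zero hPt h3) (mul_ne_zero h1 h2)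
  have hsum : ∑ t, u t ≤ ∑ t, j t := by
    calc ∑ t, u t = ∑ a, ∑ b, ∑ c, u (a, b, c) := by
          simp only [Fintype.sum_prod_type]
      _ = ∑ a, ∑ b, ((∑ c, P (a, b, c)) * d12 (a, b) / (d1 a * d2 b)) := by
          refine Finset.sum_congr rfl fun a _ => Finset.sum_congr rfl fun b _ => ?_
          simp only [hu]
          rw [← Finset.sum_div, ← Finset.sum_mul]
      _ = ∑ a, ∑ b, ((d1 a * d2 b) * d12 (a, b) / (d1 a * d2 b)) := by
          simp only [hP12]
      _ ≤ ∑ a, ∑ b, d12 (a, b) := by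
          refine Finset.sum_le_sum fun a _ => Finset.sum_le_sum fun b _ => ?_
          by_cases hD : d1 a * d2 b = 0
          · rw [hD]
            simp only [zero_mul, zero_div]
            exact dist'_nonneg (f := fun t : A × B × C => (t.1, t.2.1)) hj (a, b)
          · rw [mul_div_assoc, mul_comm, div_mul_cancel₀ _ hD]
      _ = ∑ t' : A × B, d12 t' := by rw [Fintype.sum_prod_type]
      _ = ∑ t, j t := sum_dist'
  have hQ : shannonEntropy j (fun t => (t.1, t.2.2)) + shannonEntropy j (fun t => (t.2.1, t.2.2))
      - shannonEntropy j id - shannonEntropy j (fun t => t.2.2)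
      - (shannonEntropy j (fun t => t.1) + shannonEntropy j (fun t => t.2.1)
        - shannonEntropy j (fun t => (t.1, t.2.1)))
      = ∑ t, j t * (Real.log (j t) - Real.log (u t)) := by
    simp only [entropy_exp, dist'_id, id_eq]
    rw [← Finset.sum_add_distrib, ← Finset.sum_sub_distrib, ← Finset.sum_sub_distrib,
      ← Finset.sum_add_distrib, ← Finset.sum_sub_distrib, ← Finset.sum_sub_distrib]
    refine Finset.sum_congr rfl fun t _ => ?_
    by_cases ht : j t = 0
    · simp [ht]
    · have h1 : d1 t.1 ≠ 0 := dist'_ne_zero (f := fun t : A × B × C => t.1) hj ht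
      have h2 : d2 t.2.1 ≠ 0 := dist'_ne_zero (f := fun t : A × B × C => t.2.1) hj ht
      have h3 : d12 (t.1, t.2.1) ≠ 0 :=
        dist'_ne_zero (f := fun t : A × B × C => (t.1, t.2.1)) hj ht
      have hf : dist' j (fun t : A × B × C => (t.1, t.2.2)) (t.1, t.2.2) ≠ 0 :=
        dist'_ne_zero (f := fun t : A × B × C => (t.1, t.2.2)) hj ht
      have hg : dist' j (fun t : A × B × C => (t.2.1, t.2.2)) (t.2.1, t.2.2) ≠ 0 :=
        dist'_ne_zero (f := fun t : A × B × C => (t.2.1, t.2.2)) hj ht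
      have hh : dist' j (fun t : A × B × C => t.2.2) t.2.2 ≠ 0 :=
        dist'_ne_zero (f := fun t : A × B × C => t.2.2) hj ht
      have hPt : P t ≠ 0 := by
        rw [hP t]
        exact div_ne_zero (mul_ne_zero hf hg) hh
      have hlogu : Real.log (u t)
          = Real.log (dist' j (fun t : A × B × C => (t.1, t.2.2)) (t.1, t.2.2))
            + Real.log (dist' j (fun t : A × B × C => (t.2.1, t.2.2)) (t.2.1, t.2.2))
            - Real.log (dist' j (fun t : A × B × C => t.2.2) t.2.2)
            + Real.log (d12 (t.1, t.2.1)) - Real.log (d1 t.1) - Real.log (d2 t.2.1) := by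
        simp only [hu]
        rw [Real.log_div (mul_ne_zero hPt h3) (mul_ne_zero h1 h2), Real.log_mul hPt h3,
          Real.log_mul h1 h2, hP t, Real.log_div (mul_ne_zero hf hg) hh, Real.log_mul hf hg]
        ring
      rw [hlogu]
      ring
  have hgibbs := gibbs_sum j u hj hunn hsupp hsum
  linarith [hQ ▸ hgibbs]

end iiicore

section midmarg
open Real Finset Function
variable {A B W : Type*} [Fintype A] [Fintype B] [Fintype W]
  [DecidableEq A] [DecidableEq B] [DecidableEq W]

lemma dist'_mid (w : A × B × W → ℝ) (x : A) (z : W) :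
    dist' w (fun v => (v.1, v.2.2)) (x, z) = ∑ b, w (x, b, z) := by
  unfold dist'
  simp only [Fintype.sum_prod_type, Prod.mk.injEq, ite_and]
  have h1 : ∀ x1 x2, (∑ x3 : W, if x1 = x then if x3 = z then w (x1, x2, x3) else 0 else 0)
      = if x1 = x then w (x1, x2, z) else 0 := by
    intro x1 x2
    by_cases h : x1 = x
    · simp [h]
    · simp [h]
  simp only [h1]
  rw [Finset.sum_comm]
  have h2 : ∀ x2, (∑ x1 : A, if x1 = x then w (x1, x2, z) else 0) = w (x, x2, z) := by
    intro x2
    simp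
  simp only [h2]

lemma dist'_snd_sum (w : A × W → ℝ) (y : W) :
    dist' w (fun v => v.2) y = ∑ a, w (a, y) := by
  unfold dist'
  simp only [Fintype.sum_prod_type]
  simp

lemma sum_nonneg_zero {ι : Type*} [Fintype ι] {f : ι → ℝ} (hf : ∀ i, 0 ≤ f i)
    (h : ∑ i, f i = 0) (i : ι) : f i = 0 :=
  (Finset.sum_eq_zero_iff_of_nonneg (fun i _ => hf i)).1 h i (mem_univ i)

end midmarg

section transfer
open Real Finset Function
variable {V U' U : Type*} [Fintype V] [Fintype U'] [Fintype U]
  [DecidableEq U'] [DecidableEq U]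

lemma dist'_transfer {q r : V → ℝ} {f : V → U'} (h : dist' q f = dist' r f) (g : U' → U) :
    dist' q (fun v => g (f v)) = dist' r (fun v => g (f v)) :=
  funext fun a => by
    rw [dist'_comp (w := q) (f := f) g a, dist'_comp (w := r) (f := f) g a, h]

lemma entropy_transfer {q r : V → ℝ} {f : V → U'} (h : dist' q f = dist' r f) (g : U' → U) :
    shannonEntropy q (fun v => g (f v)) = shannonEntropy r (fun v => g (f v)) := by
  rw [entropy_comp (w := q) (f := f) g, entropy_comp (w := r) (f := f) g, h]

end transfer

theorem stmt_16 {Ω S₁ S₂ S₃ S₄ : Type*} [Fintype Ω]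
    [Fintype S₁] [Fintype S₂] [Fintype S₃] [Fintype S₄]
    [DecidableEq S₁] [DecidableEq S₂] [DecidableEq S₃] [DecidableEq S₄]
    (p : Ω → ℝ) (hp : ∀ ω, 0 ≤ p ω) (hp1 : ∑ ω, p ω = 1)
    (X₁ : Ω → S₁) (X₂ : Ω → S₂) (X₃ : Ω → S₃) (X₄ : Ω → S₄)
    (h12 : mutualInfo p X₁ X₂ = 0) (h12c3 : condMutualInfo p X₁ X₂ X₃ = 0) :
    mutualInfo p X₃ X₄ ≤ condMutualInfo p X₃ X₄ X₁ + condMutualInfo p X₃ X₄ X₂ := by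
  classical
  set r : S₁ × S₂ × S₃ × S₄ → ℝ := dist' p (fun ω => (X₁ ω, X₂ ω, X₃ ω, X₄ ω)) with hrdef
  have hrnn : ∀ v, 0 ≤ r v := fun v => dist'_nonneg hp v
  -- the auxiliary distribution q = m134 * m234 / m34
  set q : S₁ × S₂ × S₃ × S₄ → ℝ := fun v =>
    dist' r (fun v => (v.1, v.2.2)) (v.1, v.2.2) * dist' r (fun v => (v.2.1, v.2.2)) (v.2.1, v.2.2)
      / dist' r (fun v => v.2.2) v.2.2 with hqdef
  have hqnn : ∀ v, 0 ≤ q v := by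
    intro v
    rw [hqdef]
    have h1 := dist'_nonneg (w := r) (f := fun v => (v.1, v.2.2)) hrnn (v.1, v.2.2)
    have h2 := dist'_nonneg (w := r) (f := fun v => (v.2.1, v.2.2)) hrnn (v.2.1, v.2.2)
    have h3 := dist'_nonneg (w := r) (f := fun v => v.2.2) hrnn v.2.2
    positivity
  -- marginal sums
  have hsum134 : ∀ cd : S₃ × S₄, (∑ a, dist' r (fun v => (v.1, v.2.2)) (a, cd))
      = dist' r (fun v => v.2.2) cd :=
    fun cd => sum_dist'_fst (w := r) (fun v => v.1) (fun v => v.2.2) cd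
  have hsum234 : ∀ cd : S₃ × S₄, (∑ b, dist' r (fun v => (v.2.1, v.2.2)) (b, cd))
      = dist' r (fun v => v.2.2) cd :=
    fun cd => sum_dist'_fst (w := r) (fun v => v.2.1) (fun v => v.2.2) cd
  have h134z : ∀ (a : S₁) (cd : S₃ × S₄), dist' r (fun v => v.2.2) cd = 0 →
      dist' r (fun v => (v.1, v.2.2)) (a, cd) = 0 := by
    intro a cd h
    exact sum_nonneg_zero
      (fun a' => dist'_nonneg (w := r) (f := fun v => (v.1, v.2.2)) hrnn (a', cd))
      (by rw [hsum134 cd, h]) a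
  have h234z : ∀ (b : S₂) (cd : S₃ × S₄), dist' r (fun v => v.2.2) cd = 0 →
      dist' r (fun v => (v.2.1, v.2.2)) (b, cd) = 0 := by
    intro b cd h
    exact sum_nonneg_zero
      (fun b' => dist'_nonneg (w := r) (f := fun v => (v.2.1, v.2.2)) hrnn (b', cd))
      (by rw [hsum234 cd, h]) b
  -- q has the same 134-marginal as r
  have hQ134 : dist' q (fun v => (v.1, v.2.2)) = dist' r (fun v => (v.1, v.2.2)) := by
    funext x
    obtain ⟨a, cd⟩ := x
    rw [dist'_mid q a cd]
    simp only [hqdef]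
    rw [← Finset.sum_div, ← Finset.mul_sum, hsum234 cd]
    by_cases h : dist' r (fun v => v.2.2) cd = 0
    · rw [h134z a cd h, h]
      simp
    · rw [mul_div_assoc, div_self h, mul_one]
  -- q has the same 234-marginal as r
  have hQ234 : dist' q (fun v => (v.2.1, v.2.2)) = dist' r (fun v => (v.2.1, v.2.2)) := by
    funext x
    obtain ⟨b, cd⟩ := x
    have e : dist' q (fun v => (v.2.1, v.2.2)) (b, cd) = ∑ a, q (a, b, cd) :=
      dist'_snd_sum q (b, cd)
    rw [e]
    simp only [hqdef]
    rw [← Finset.sum_div, ← Finset.sum_mul, hsum134 cd]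
    by_cases h : dist' r (fun v => v.2.2) cd = 0
    · rw [h234z b cd h, h]
      simp
    · rw [mul_comm, mul_div_assoc, div_self h, mul_one]
  have hQ34 : dist' q (fun v => v.2.2) = dist' r (fun v => v.2.2) :=
    dist'_transfer hQ134 (fun y => y.2)
  -- entropy transfers from q to r
  have hH1 : shannonEntropy q (fun v => v.1) = shannonEntropy r (fun v => v.1) :=
    entropy_transfer hQ134 (fun y => y.1)
  have hH2 : shannonEntropy q (fun v => v.2.1) = shannonEntropy r (fun v => v.2.1) :=
    entropy_transfer hQ234 (fun y => y.1)
  have hH3 : shannonEntropy q (fun v => v.2.2.1) = shannonEntropy r (fun v => v.2.2.1) :=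
    entropy_transfer hQ34 (fun y => y.1)
  have hH4 : shannonEntropy q (fun v => v.2.2.2) = shannonEntropy r (fun v => v.2.2.2) :=
    entropy_transfer hQ34 (fun y => y.2)
  have hH13 : shannonEntropy q (fun v => (v.1, v.2.2.1))
      = shannonEntropy r (fun v => (v.1, v.2.2.1)) :=
    entropy_transfer hQ134 (fun y => (y.1, y.2.1))
  have hH14 : shannonEntropy q (fun v => (v.1, v.2.2.2))
      = shannonEntropy r (fun v => (v.1, v.2.2.2)) :=
    entropy_transfer hQ134 (fun y => (y.1, y.2.2))
  have hH23 : shannonEntropy q (fun v => (v.2.1, v.2.2.1))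
      = shannonEntropy r (fun v => (v.2.1, v.2.2.1)) :=
    entropy_transfer hQ234 (fun y => (y.1, y.2.1))
  have hH24 : shannonEntropy q (fun v => (v.2.1, v.2.2.2))
      = shannonEntropy r (fun v => (v.2.1, v.2.2.2)) :=
    entropy_transfer hQ234 (fun y => (y.1, y.2.2))
  have hH134 : shannonEntropy q (fun v => (v.1, v.2.2))
      = shannonEntropy r (fun v => (v.1, v.2.2)) :=
    entropy_transfer hQ134 id
  have hH234 : shannonEntropy q (fun v => (v.2.1, v.2.2))
      = shannonEntropy r (fun v => (v.2.1, v.2.2)) :=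
    entropy_transfer hQ234 id
  have hH34 : shannonEntropy q (fun v => v.2.2) = shannonEntropy r (fun v => v.2.2) :=
    entropy_transfer hQ34 id
  -- conditional independence identity for q : H_q(1234) = H_r(134)+H_r(234)-H_r(34)
  have hHid : shannonEntropy q id = shannonEntropy r (fun v => (v.1, v.2.2))
      + shannonEntropy r (fun v => (v.2.1, v.2.2)) - shannonEntropy r (fun v => v.2.2) := by
    have hqid : shannonEntropy q id = ∑ v, negMulLog (q v) := by
      rw [shannonEntropy_eq_dist']
      simp only [dist'_id]
    have hkey : shannonEntropy q id = shannonEntropy q (fun v => (v.1, v.2.2))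
        + shannonEntropy q (fun v => (v.2.1, v.2.2)) - shannonEntropy q (fun v => v.2.2) := by
      rw [hqid]
      simp only [entropy_exp (w := q) (f := fun v => (v.1, v.2.2)),
        entropy_exp (w := q) (f := fun v => (v.2.1, v.2.2)),
        entropy_exp (w := q) (f := fun v => v.2.2)]
      rw [← Finset.sum_add_distrib, ← Finset.sum_sub_distrib]
      refine Finset.sum_congr rfl fun v _ => ?_
      rw [hQ134, hQ234, hQ34]
      by_cases hv : q v = 0
      · rw [hv]; simp
      · have hqv : q v = dist' r (fun v => (v.1, v.2.2)) (v.1, v.2.2)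
            * dist' r (fun v => (v.2.1, v.2.2)) (v.2.1, v.2.2)
            / dist' r (fun v => v.2.2) v.2.2 := by rw [hqdef]
        have hZ : dist' r (fun v => v.2.2) v.2.2 ≠ 0 := by
          intro h0
          exact hv (by rw [hqv, h0, div_zero])
        have hXY : dist' r (fun v => (v.1, v.2.2)) (v.1, v.2.2)
            * dist' r (fun v => (v.2.1, v.2.2)) (v.2.1, v.2.2) ≠ 0 := by
          intro h0
          exact hv (by rw [hqv, h0, zero_div])
        obtain ⟨hX, hY⟩ := mul_ne_zero_iff.mp hXY
        rw [negMulLog]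
        nth_rewrite 2 [hqv]
        rw [Real.log_div hXY hZ, Real.log_mul hX hY]
        ring
    rw [hkey, hH134, hH234, hH34]
  -- Shannon inequality instance: I_q(1;2|4) >= 0
  have hA2 : 0 ≤ shannonEntropy q (fun v => (v.1, v.2.2.2))
      + shannonEntropy q (fun v => (v.2.1, v.2.2.2))
      - shannonEntropy q (fun v => (v.1, v.2.1, v.2.2.2))
      - shannonEntropy q (fun v => v.2.2.2) := by
    have h := condMI_core (j := dist' q (fun v => (v.1, v.2.1, v.2.2.2)))
      (fun t => dist'_nonneg hqnn t)
    have e1 : shannonEntropy q (fun v => (v.1, v.2.2.2))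
        = shannonEntropy (dist' q (fun v => (v.1, v.2.1, v.2.2.2))) (fun t => (t.1, t.2.2)) :=
      entropy_comp (w := q) (f := fun v => (v.1, v.2.1, v.2.2.2)) (fun t => (t.1, t.2.2))
    have e2 : shannonEntropy q (fun v => (v.2.1, v.2.2.2))
        = shannonEntropy (dist' q (fun v => (v.1, v.2.1, v.2.2.2))) (fun t => (t.2.1, t.2.2)) :=
      entropy_comp (w := q) (f := fun v => (v.1, v.2.1, v.2.2.2)) (fun t => (t.2.1, t.2.2))
    have e3 : shannonEntropy q (fun v => (v.1, v.2.1, v.2.2.2))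
        = shannonEntropy (dist' q (fun v => (v.1, v.2.1, v.2.2.2))) id :=
      (entropy_id_dist _).symm
    have e4 : shannonEntropy q (fun v => v.2.2.2)
        = shannonEntropy (dist' q (fun v => (v.1, v.2.1, v.2.2.2))) (fun t => t.2.2) :=
      entropy_comp (w := q) (f := fun v => (v.1, v.2.1, v.2.2.2)) (fun t => t.2.2)
    rw [e1, e2, e3, e4]
    exact h
  -- Shannon inequality instance: I_q(3;4|12) >= 0
  have hinj1 : Injective (fun y : S₁ × S₂ × S₃ => (y.2.2, (y.1, y.2.1))) := by
    rintro ⟨a, b, c⟩ ⟨a', b', c'⟩ h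
    simp only [Prod.ext_iff] at h ⊢
    tauto
  have hinj2 : Injective (fun y : S₁ × S₂ × S₄ => (y.2.2, (y.1, y.2.1))) := by
    rintro ⟨a, b, c⟩ ⟨a', b', c'⟩ h
    simp only [Prod.ext_iff] at h ⊢
    tauto
  have hinj3 : Injective (fun y : S₁ × S₂ × S₃ × S₄ => (y.2.2.1, (y.2.2.2, (y.1, y.2.1)))) := by
    rintro ⟨a, b, c, d⟩ ⟨a', b', c', d'⟩ h
    simp only [Prod.ext_iff] at h ⊢
    tauto
  have hA3 : 0 ≤ shannonEntropy q (fun v => (v.1, v.2.1, v.2.2.1))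
      + shannonEntropy q (fun v => (v.1, v.2.1, v.2.2.2))
      - shannonEntropy q id
      - shannonEntropy q (fun v => (v.1, v.2.1)) := by
    have h := condMI_core (j := dist' q (fun v => (v.2.2.1, v.2.2.2, (v.1, v.2.1))))
      (fun t => dist'_nonneg hqnn t)
    have a1 : shannonEntropy q (fun v => (v.2.2.1, (v.1, v.2.1)))
        = shannonEntropy (dist' q (fun v => (v.2.2.1, v.2.2.2, (v.1, v.2.1))))
          (fun t => (t.1, t.2.2)) :=
      entropy_comp (w := q) (f := fun v => (v.2.2.1, v.2.2.2, (v.1, v.2.1)))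
        (fun t => (t.1, t.2.2))
    have a1' : shannonEntropy q (fun v => (v.2.2.1, (v.1, v.2.1)))
        = shannonEntropy q (fun v => (v.1, v.2.1, v.2.2.1)) :=
      entropy_comp_inj (w := q) (f := fun v => (v.1, v.2.1, v.2.2.1))
        (fun y => (y.2.2, (y.1, y.2.1))) hinj1
    have a2 : shannonEntropy q (fun v => (v.2.2.2, (v.1, v.2.1)))
        = shannonEntropy (dist' q (fun v => (v.2.2.1, v.2.2.2, (v.1, v.2.1))))
          (fun t => (t.2.1, t.2.2)) :=
      entropy_comp (w := q) (f := fun v => (v.2.2.1, v.2.2.2, (v.1, v.2.1)))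
        (fun t => (t.2.1, t.2.2))
    have a2' : shannonEntropy q (fun v => (v.2.2.2, (v.1, v.2.1)))
        = shannonEntropy q (fun v => (v.1, v.2.1, v.2.2.2)) :=
      entropy_comp_inj (w := q) (f := fun v => (v.1, v.2.1, v.2.2.2))
        (fun y => (y.2.2, (y.1, y.2.1))) hinj2
    have a3 : shannonEntropy q (fun v => (v.2.2.1, v.2.2.2, (v.1, v.2.1)))
        = shannonEntropy (dist' q (fun v => (v.2.2.1, v.2.2.2, (v.1, v.2.1)))) id :=
      (entropy_id_dist _).symm
    have a3' : shannonEntropy q (fun v => (v.2.2.1, v.2.2.2, (v.1, v.2.1)))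
        = shannonEntropy q id :=
      entropy_comp_inj (w := q) (f := id)
        (fun y => (y.2.2.1, (y.2.2.2, (y.1, y.2.1)))) hinj3
    have a4 : shannonEntropy q (fun v => (v.1, v.2.1))
        = shannonEntropy (dist' q (fun v => (v.2.2.1, v.2.2.2, (v.1, v.2.1))))
          (fun t => t.2.2) :=
      entropy_comp (w := q) (f := fun v => (v.2.2.1, v.2.2.2, (v.1, v.2.1)))
        (fun t => t.2.2)
    rw [← a1', a1, ← a2', a2, ← a3', a3, a4]
    exact h
  -- independence factorization from I(X1;X2) = 0
  have hmisum : ∑ t, dist' p (fun ω => (X₁ ω, X₂ ω)) t = 1 := by rw [sum_dist', hp1]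
  have c1 : shannonEntropy p X₁
      = shannonEntropy (dist' p (fun ω => (X₁ ω, X₂ ω))) (fun t => t.1) :=
    entropy_comp (w := p) (f := fun ω => (X₁ ω, X₂ ω)) (fun t => t.1)
  have c2 : shannonEntropy p X₂
      = shannonEntropy (dist' p (fun ω => (X₁ ω, X₂ ω))) (fun t => t.2) :=
    entropy_comp (w := p) (f := fun ω => (X₁ ω, X₂ ω)) (fun t => t.2)
  have c3 : shannonEntropy p (fun ω => (X₁ ω, X₂ ω))
      = shannonEntropy (dist' p (fun ω => (X₁ ω, X₂ ω))) id :=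
    (entropy_id_dist _).symm
  rw [mutualInfo, c1, c2, c3] at h12
  have hF12 : ∀ t, dist' p (fun ω => (X₁ ω, X₂ ω)) t
      = uMI (dist' p (fun ω => (X₁ ω, X₂ ω))) t :=
    indep_core (fun t => dist'_nonneg hp t) hmisum h12
  -- conditional independence factorization from I(X1;X2|X3) = 0
  have d1 : shannonEntropy p (fun ω => (X₁ ω, X₃ ω))
      = shannonEntropy (dist' p (fun ω => (X₁ ω, X₂ ω, X₃ ω))) (fun t => (t.1, t.2.2)) :=
    entropy_comp (w := p) (f := fun ω => (X₁ ω, X₂ ω, X₃ ω)) (fun t => (t.1, t.2.2))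
  have d2 : shannonEntropy p (fun ω => (X₂ ω, X₃ ω))
      = shannonEntropy (dist' p (fun ω => (X₁ ω, X₂ ω, X₃ ω))) (fun t => (t.2.1, t.2.2)) :=
    entropy_comp (w := p) (f := fun ω => (X₁ ω, X₂ ω, X₃ ω)) (fun t => (t.2.1, t.2.2))
  have d3 : shannonEntropy p (fun ω => (X₁ ω, X₂ ω, X₃ ω))
      = shannonEntropy (dist' p (fun ω => (X₁ ω, X₂ ω, X₃ ω))) id :=
    (entropy_id_dist _).symm
  have d4 : shannonEntropy p X₃
      = shannonEntropy (dist' p (fun ω => (X₁ ω, X₂ ω, X₃ ω))) (fun t => t.2.2) :=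
    entropy_comp (w := p) (f := fun ω => (X₁ ω, X₂ ω, X₃ ω)) (fun t => t.2.2)
  rw [condMutualInfo, d1, d2, d3, d4] at h12c3
  have hF123 : ∀ t, dist' p (fun ω => (X₁ ω, X₂ ω, X₃ ω)) t
      = uCI (dist' p (fun ω => (X₁ ω, X₂ ω, X₃ ω))) t :=
    ci_core (fun t => dist'_nonneg hp t) h12c3
  -- marginal identifications between j := dist' q π123 and the p-marginals
  have hq13 : dist' q (fun v => (v.1, v.2.2.1)) = dist' r (fun v => (v.1, v.2.2.1)) :=
    dist'_transfer hQ134 (fun y => (y.1, y.2.1))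
  have hq23 : dist' q (fun v => (v.2.1, v.2.2.1)) = dist' r (fun v => (v.2.1, v.2.2.1)) :=
    dist'_transfer hQ234 (fun y => (y.1, y.2.1))
  have hq3 : dist' q (fun v => v.2.2.1) = dist' r (fun v => v.2.2.1) :=
    dist'_transfer hQ34 (fun y => y.1)
  have hq1 : dist' q (fun v => v.1) = dist' r (fun v => v.1) :=
    dist'_transfer hQ134 (fun y => y.1)
  have hq2 : dist' q (fun v => v.2.1) = dist' r (fun v => v.2.1) :=
    dist'_transfer hQ234 (fun y => y.1)
  -- r marginals equal p marginals
  have hr13 : dist' r (fun v => (v.1, v.2.2.1)) = dist' p (fun ω => (X₁ ω, X₃ ω)) := by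
    funext x
    rw [hrdef]
    exact (dist'_comp (w := p) (f := fun ω => (X₁ ω, X₂ ω, X₃ ω, X₄ ω))
      (fun v => (v.1, v.2.2.1)) x).symm
  have hr23 : dist' r (fun v => (v.2.1, v.2.2.1)) = dist' p (fun ω => (X₂ ω, X₃ ω)) := by
    funext x
    rw [hrdef]
    exact (dist'_comp (w := p) (f := fun ω => (X₁ ω, X₂ ω, X₃ ω, X₄ ω))
      (fun v => (v.2.1, v.2.2.1)) x).symm
  have hr3 : dist' r (fun v => v.2.2.1) = dist' p X₃ := by
    funext x
    rw [hrdef]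
    exact (dist'_comp (w := p) (f := fun ω => (X₁ ω, X₂ ω, X₃ ω, X₄ ω))
      (fun v => v.2.2.1) x).symm
  have hr1 : dist' r (fun v => v.1) = dist' p X₁ := by
    funext x
    rw [hrdef]
    exact (dist'_comp (w := p) (f := fun ω => (X₁ ω, X₂ ω, X₃ ω, X₄ ω))
      (fun v => v.1) x).symm
  have hr2 : dist' r (fun v => v.2.1) = dist' p X₂ := by
    funext x
    rw [hrdef]
    exact (dist'_comp (w := p) (f := fun ω => (X₁ ω, X₂ ω, X₃ ω, X₄ ω))
      (fun v => v.2.1) x).symm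
  -- marginals of j = dist' q π123
  have hj13 : dist' (dist' q (fun v => (v.1, v.2.1, v.2.2.1))) (fun t => (t.1, t.2.2))
      = dist' p (fun ω => (X₁ ω, X₃ ω)) := by
    funext x
    rw [← dist'_comp (w := q) (f := fun v => (v.1, v.2.1, v.2.2.1)) (fun t => (t.1, t.2.2)) x,
      hq13, hr13]
  have hj23 : dist' (dist' q (fun v => (v.1, v.2.1, v.2.2.1))) (fun t => (t.2.1, t.2.2))
      = dist' p (fun ω => (X₂ ω, X₃ ω)) := by
    funext x
    rw [← dist'_comp (w := q) (f := fun v => (v.1, v.2.1, v.2.2.1)) (fun t => (t.2.1, t.2.2)) x,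
      hq23, hr23]
  have hj3 : dist' (dist' q (fun v => (v.1, v.2.1, v.2.2.1))) (fun t => t.2.2)
      = dist' p X₃ := by
    funext x
    rw [← dist'_comp (w := q) (f := fun v => (v.1, v.2.1, v.2.2.1)) (fun t => t.2.2) x,
      hq3, hr3]
  have hj1 : dist' (dist' q (fun v => (v.1, v.2.1, v.2.2.1))) (fun t => t.1)
      = dist' p X₁ := by
    funext x
    rw [← dist'_comp (w := q) (f := fun v => (v.1, v.2.1, v.2.2.1)) (fun t => t.1) x,
      hq1, hr1]
  have hj2 : dist' (dist' q (fun v => (v.1, v.2.1, v.2.2.1))) (fun t => t.2.1)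
      = dist' p X₂ := by
    funext x
    rw [← dist'_comp (w := q) (f := fun v => (v.1, v.2.1, v.2.2.1)) (fun t => t.2.1) x,
      hq2, hr2]
  -- marginals of P = dist' p (X1,X2,X3)
  have hp13 : dist' (dist' p (fun ω => (X₁ ω, X₂ ω, X₃ ω))) (fun t => (t.1, t.2.2))
      = dist' p (fun ω => (X₁ ω, X₃ ω)) :=
    funext fun x => (dist'_comp (w := p) (f := fun ω => (X₁ ω, X₂ ω, X₃ ω))
      (fun t => (t.1, t.2.2)) x).symm
  have hp23 : dist' (dist' p (fun ω => (X₁ ω, X₂ ω, X₃ ω))) (fun t => (t.2.1, t.2.2))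
      = dist' p (fun ω => (X₂ ω, X₃ ω)) :=
    funext fun x => (dist'_comp (w := p) (f := fun ω => (X₁ ω, X₂ ω, X₃ ω))
      (fun t => (t.2.1, t.2.2)) x).symm
  have hp3 : dist' (dist' p (fun ω => (X₁ ω, X₂ ω, X₃ ω))) (fun t => t.2.2)
      = dist' p X₃ :=
    funext fun x => (dist'_comp (w := p) (f := fun ω => (X₁ ω, X₂ ω, X₃ ω))
      (fun t => t.2.2) x).symm
  have hpm1 : dist' (dist' p (fun ω => (X₁ ω, X₂ ω))) (fun t => t.1) = dist' p X₁ :=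
    funext fun x => (dist'_comp (w := p) (f := fun ω => (X₁ ω, X₂ ω)) (fun t => t.1) x).symm
  have hpm2 : dist' (dist' p (fun ω => (X₁ ω, X₂ ω))) (fun t => t.2) = dist' p X₂ :=
    funext fun x => (dist'_comp (w := p) (f := fun ω => (X₁ ω, X₂ ω)) (fun t => t.2) x).symm
  -- the hypotheses of iii_core
  have hPfact : ∀ t : S₁ × S₂ × S₃, dist' p (fun ω => (X₁ ω, X₂ ω, X₃ ω)) t
      = dist' (dist' q (fun v => (v.1, v.2.1, v.2.2.1))) (fun t => (t.1, t.2.2)) (t.1, t.2.2)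
        * dist' (dist' q (fun v => (v.1, v.2.1, v.2.2.1))) (fun t => (t.2.1, t.2.2)) (t.2.1, t.2.2)
        / dist' (dist' q (fun v => (v.1, v.2.1, v.2.2.1))) (fun t => t.2.2) t.2.2 := by
    intro t
    rw [hF123 t]
    unfold uCI
    rw [hp13, hp23, hp3, hj13, hj23, hj3]
  have hP12fact : ∀ (a : S₁) (b : S₂), (∑ c, dist' p (fun ω => (X₁ ω, X₂ ω, X₃ ω)) (a, b, c))
      = dist' (dist' q (fun v => (v.1, v.2.1, v.2.2.1))) (fun t => t.1) a
        * dist' (dist' q (fun v => (v.1, v.2.1, v.2.2.1))) (fun t => t.2.1) b := by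
    intro a b
    rw [sum_dist'_triple (w := p) X₁ X₂ X₃ a b, hF12 (a, b)]
    unfold uMI
    rw [hpm1, hpm2, hj1, hj2]
  have hiii := iii_core (dist' q (fun v => (v.1, v.2.1, v.2.2.1)))
    (dist' p (fun ω => (X₁ ω, X₂ ω, X₃ ω)))
    (fun t => dist'_nonneg hqnn t) hPfact hP12fact
  -- convert hiii to canonical q-entropies
  have b1 : shannonEntropy q (fun v => v.1)
      = shannonEntropy (dist' q (fun v => (v.1, v.2.1, v.2.2.1))) (fun t => t.1) :=
    entropy_comp (w := q) (f := fun v => (v.1, v.2.1, v.2.2.1)) (fun t => t.1)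
  have b2 : shannonEntropy q (fun v => v.2.1)
      = shannonEntropy (dist' q (fun v => (v.1, v.2.1, v.2.2.1))) (fun t => t.2.1) :=
    entropy_comp (w := q) (f := fun v => (v.1, v.2.1, v.2.2.1)) (fun t => t.2.1)
  have b12 : shannonEntropy q (fun v => (v.1, v.2.1))
      = shannonEntropy (dist' q (fun v => (v.1, v.2.1, v.2.2.1))) (fun t => (t.1, t.2.1)) :=
    entropy_comp (w := q) (f := fun v => (v.1, v.2.1, v.2.2.1)) (fun t => (t.1, t.2.1))
  have b13 : shannonEntropy q (fun v => (v.1, v.2.2.1))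
      = shannonEntropy (dist' q (fun v => (v.1, v.2.1, v.2.2.1))) (fun t => (t.1, t.2.2)) :=
    entropy_comp (w := q) (f := fun v => (v.1, v.2.1, v.2.2.1)) (fun t => (t.1, t.2.2))
  have b23 : shannonEntropy q (fun v => (v.2.1, v.2.2.1))
      = shannonEntropy (dist' q (fun v => (v.1, v.2.1, v.2.2.1))) (fun t => (t.2.1, t.2.2)) :=
    entropy_comp (w := q) (f := fun v => (v.1, v.2.1, v.2.2.1)) (fun t => (t.2.1, t.2.2))
  have b123 : shannonEntropy q (fun v => (v.1, v.2.1, v.2.2.1))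
      = shannonEntropy (dist' q (fun v => (v.1, v.2.1, v.2.2.1))) id :=
    (entropy_id_dist _).symm
  have b3 : shannonEntropy q (fun v => v.2.2.1)
      = shannonEntropy (dist' q (fun v => (v.1, v.2.1, v.2.2.1))) (fun t => t.2.2) :=
    entropy_comp (w := q) (f := fun v => (v.1, v.2.1, v.2.2.1)) (fun t => t.2.2)
  rw [← b1, ← b2, ← b12, ← b13, ← b23, ← b123, ← b3] at hiii
  -- convert the goal's p-entropies to r-entropies
  have hswap13 : Injective (fun y : S₁ × S₃ => (y.2, y.1)) := by
    rintro ⟨a, b⟩ ⟨a', b'⟩ h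
    simp only [Prod.ext_iff] at h ⊢
    tauto
  have hswap14 : Injective (fun y : S₁ × S₄ => (y.2, y.1)) := by
    rintro ⟨a, b⟩ ⟨a', b'⟩ h
    simp only [Prod.ext_iff] at h ⊢
    tauto
  have hswap23 : Injective (fun y : S₂ × S₃ => (y.2, y.1)) := by
    rintro ⟨a, b⟩ ⟨a', b'⟩ h
    simp only [Prod.ext_iff] at h ⊢
    tauto
  have hswap24 : Injective (fun y : S₂ × S₄ => (y.2, y.1)) := by
    rintro ⟨a, b⟩ ⟨a', b'⟩ h
    simp only [Prod.ext_iff] at h ⊢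
    tauto
  have hrot134 : Injective (fun y : S₁ × S₃ × S₄ => (y.2.1, (y.2.2, y.1))) := by
    rintro ⟨a, b, c⟩ ⟨a', b', c'⟩ h
    simp only [Prod.ext_iff] at h ⊢
    tauto
  have hrot234 : Injective (fun y : S₂ × S₃ × S₄ => (y.2.1, (y.2.2, y.1))) := by
    rintro ⟨a, b, c⟩ ⟨a', b', c'⟩ h
    simp only [Prod.ext_iff] at h ⊢
    tauto
  have t1 : shannonEntropy p X₁ = shannonEntropy r (fun v => v.1) := by
    rw [hrdef]
    exact entropy_comp (w := p) (f := fun ω => (X₁ ω, X₂ ω, X₃ ω, X₄ ω)) (fun v => v.1)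
  have t2 : shannonEntropy p X₂ = shannonEntropy r (fun v => v.2.1) := by
    rw [hrdef]
    exact entropy_comp (w := p) (f := fun ω => (X₁ ω, X₂ ω, X₃ ω, X₄ ω)) (fun v => v.2.1)
  have t3 : shannonEntropy p X₃ = shannonEntropy r (fun v => v.2.2.1) := by
    rw [hrdef]
    exact entropy_comp (w := p) (f := fun ω => (X₁ ω, X₂ ω, X₃ ω, X₄ ω)) (fun v => v.2.2.1)
  have t4 : shannonEntropy p X₄ = shannonEntropy r (fun v => v.2.2.2) := by
    rw [hrdef]
    exact entropy_comp (w := p) (f := fun ω => (X₁ ω, X₂ ω, X₃ ω, X₄ ω)) (fun v => v.2.2.2)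
  have t34 : shannonEntropy p (fun ω => (X₃ ω, X₄ ω)) = shannonEntropy r (fun v => v.2.2) := by
    rw [hrdef]
    exact entropy_comp (w := p) (f := fun ω => (X₁ ω, X₂ ω, X₃ ω, X₄ ω)) (fun v => v.2.2)
  have t31 : shannonEntropy p (fun ω => (X₃ ω, X₁ ω))
      = shannonEntropy r (fun v => (v.1, v.2.2.1)) := by
    have s1 : shannonEntropy p (fun ω => (X₃ ω, X₁ ω))
        = shannonEntropy r (fun v => (v.2.2.1, v.1)) := by
      rw [hrdef]
      exact entropy_comp (w := p) (f := fun ω => (X₁ ω, X₂ ω, X₃ ω, X₄ ω))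
        (fun v => (v.2.2.1, v.1))
    have s2 : shannonEntropy r (fun v => (v.2.2.1, v.1))
        = shannonEntropy r (fun v => (v.1, v.2.2.1)) :=
      entropy_comp_inj (w := r) (f := fun v => (v.1, v.2.2.1)) (fun y => (y.2, y.1)) hswap13
    rw [s1, s2]
  have t41 : shannonEntropy p (fun ω => (X₄ ω, X₁ ω))
      = shannonEntropy r (fun v => (v.1, v.2.2.2)) := by
    have s1 : shannonEntropy p (fun ω => (X₄ ω, X₁ ω))
        = shannonEntropy r (fun v => (v.2.2.2, v.1)) := by
      rw [hrdef]
      exact entropy_comp (w := p) (f := fun ω => (X₁ ω, X₂ ω, X₃ ω, X₄ ω))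
        (fun v => (v.2.2.2, v.1))
    have s2 : shannonEntropy r (fun v => (v.2.2.2, v.1))
        = shannonEntropy r (fun v => (v.1, v.2.2.2)) :=
      entropy_comp_inj (w := r) (f := fun v => (v.1, v.2.2.2)) (fun y => (y.2, y.1)) hswap14
    rw [s1, s2]
  have t341 : shannonEntropy p (fun ω => (X₃ ω, X₄ ω, X₁ ω))
      = shannonEntropy r (fun v => (v.1, v.2.2)) := by
    have s1 : shannonEntropy p (fun ω => (X₃ ω, X₄ ω, X₁ ω))
        = shannonEntropy r (fun v => (v.2.2.1, (v.2.2.2, v.1))) := by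
      rw [hrdef]
      exact entropy_comp (w := p) (f := fun ω => (X₁ ω, X₂ ω, X₃ ω, X₄ ω))
        (fun v => (v.2.2.1, (v.2.2.2, v.1)))
    have s2 : shannonEntropy r (fun v => (v.2.2.1, (v.2.2.2, v.1)))
        = shannonEntropy r (fun v => (v.1, v.2.2)) :=
      entropy_comp_inj (w := r) (f := fun v => (v.1, v.2.2))
        (fun y => (y.2.1, (y.2.2, y.1))) hrot134
    rw [s1, s2]
  have t32 : shannonEntropy p (fun ω => (X₃ ω, X₂ ω))
      = shannonEntropy r (fun v => (v.2.1, v.2.2.1)) := by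
    have s1 : shannonEntropy p (fun ω => (X₃ ω, X₂ ω))
        = shannonEntropy r (fun v => (v.2.2.1, v.2.1)) := by
      rw [hrdef]
      exact entropy_comp (w := p) (f := fun ω => (X₁ ω, X₂ ω, X₃ ω, X₄ ω))
        (fun v => (v.2.2.1, v.2.1))
    have s2 : shannonEntropy r (fun v => (v.2.2.1, v.2.1))
        = shannonEntropy r (fun v => (v.2.1, v.2.2.1)) :=
      entropy_comp_inj (w := r) (f := fun v => (v.2.1, v.2.2.1)) (fun y => (y.2, y.1)) hswap23
    rw [s1, s2]
  have t42 : shannonEntropy p (fun ω => (X₄ ω, X₂ ω))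
      = shannonEntropy r (fun v => (v.2.1, v.2.2.2)) := by
    have s1 : shannonEntropy p (fun ω => (X₄ ω, X₂ ω))
        = shannonEntropy r (fun v => (v.2.2.2, v.2.1)) := by
      rw [hrdef]
      exact entropy_comp (w := p) (f := fun ω => (X₁ ω, X₂ ω, X₃ ω, X₄ ω))
        (fun v => (v.2.2.2, v.2.1))
    have s2 : shannonEntropy r (fun v => (v.2.2.2, v.2.1))
        = shannonEntropy r (fun v => (v.2.1, v.2.2.2)) :=
      entropy_comp_inj (w := r) (f := fun v => (v.2.1, v.2.2.2)) (fun y => (y.2, y.1)) hswap24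
    rw [s1, s2]
  have t342 : shannonEntropy p (fun ω => (X₃ ω, X₄ ω, X₂ ω))
      = shannonEntropy r (fun v => (v.2.1, v.2.2)) := by
    have s1 : shannonEntropy p (fun ω => (X₃ ω, X₄ ω, X₂ ω))
        = shannonEntropy r (fun v => (v.2.2.1, (v.2.2.2, v.2.1))) := by
      rw [hrdef]
      exact entropy_comp (w := p) (f := fun ω => (X₁ ω, X₂ ω, X₃ ω, X₄ ω))
        (fun v => (v.2.2.1, (v.2.2.2, v.2.1)))
    have s2 : shannonEntropy r (fun v => (v.2.2.1, (v.2.2.2, v.2.1)))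
        = shannonEntropy r (fun v => (v.2.1, v.2.2)) :=
      entropy_comp_inj (w := r) (f := fun v => (v.2.1, v.2.2))
        (fun y => (y.2.1, (y.2.2, y.1))) hrot234
    rw [s1, s2]
  rw [mutualInfo, condMutualInfo, condMutualInfo, t3, t4, t34, t31, t41, t341, t1, t32,
    t42, t342, t2]
  linarith [hiii, hA2, hA3, hHid, hH1, hH2, hH3, hH4, hH13, hH14, hH23, hH24]
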